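/- Let f be a probability density on ℝ with finite first moment, strictly positive on an interval containing its q-quantile y_q for q ∈ (0,1). If f restricted to (−∞, y_q] is not a point mass, then the inequality in the trimming lemma is strict: for any density f† with f = q f† + (1−q) f‡ (f‡ a density) and f† not supported entirely in (−∞, y_q], we have (1/q)∫_{−∞}^{y_q} y f(y) dy < ∫ y f†(y) dy. -/

import Mathlib

open MeasureTheory Set

/-- Strict version of Lee's trimming lemma. -/
theorem lee_trimming_lower_strict
    (f fdag fddag : ℝ → ℝ) (q yq : ℝ)
    (hq : q ∈ Set.Ioo (0:ℝ) 1)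
    (hf_nonneg : ∀ y, 0 ≤ f y) (hfdag_nonneg : ∀ y, 0 ≤ fdag y)
    (hfddag_nonneg : ∀ y, 0 ≤ fddag y)
    (hf_int : Integrable f) (hfdag_int : Integrable fdag) (hfddag_int : Integrable fddag)
    (hf_mass : ∫ y, f y = 1) (hfdag_mass : ∫ y, fdag y = 1)
    (hfddag_mass : ∫ y, fddag y = 1)
    (hf_mom : Integrable (fun y => y * f y))
    (hfdag_mom : Integrable (fun y => y * fdag y))
    (hfddag_mom : Integrable (fun y => y * fddag y))
    (hmix : ∀ y, f y = q * fdag y + (1 - q) * fddag y)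
    (hquant : ∫ y in Set.Iic yq, f y = q)
    (hpos : ∃ a b : ℝ, a < yq ∧ yq < b ∧ ∀ y ∈ Set.Ioo a b, 0 < f y)
    (hnondeg : ¬ ∃ m : ℝ, ∀ᵐ y ∂(volume.restrict (Set.Iic yq)), f y = 0 ∨ y = m)
    (hmass_above : 0 < ∫ y in Set.Ioi yq, fdag y) :
    (1 / q) * ∫ y in Set.Iic yq, y * f y < ∫ y, y * fdag y := by
  obtain ⟨hq0, hq1⟩ := hq
  -- pointwise domination : q * fdag ≤ f
  have hdom : ∀ y, q * fdag y ≤ f y := by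
    intro y
    have h1 : 0 ≤ (1 - q) * fddag y :=
      mul_nonneg (by linarith) (hfddag_nonneg y)
    nlinarith [hmix y]
  have hdom' : ∀ y, fdag y - f y / q ≤ 0 := by
    intro y
    have := hdom y
    rw [sub_nonpos, le_div_iff₀ hq0, mul_comm]
    exact this
  -- integrability facts
  have hsub_int : Integrable (fun y => fdag y - f y / q) := hfdag_int.sub (hf_int.div_const q)
  have hg1_int : Integrable (fun y => yq * (fdag y - f y / q)) := hsub_int.const_mul yq
  have hg2_int : Integrable (fun y => y * fdag y - (1 / q) * (y * f y)) :=
    hfdag_mom.sub (hf_mom.const_mul (1 / q))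
  -- Step F3 : on Iic yq
  have hF3 : yq * ((∫ y in Set.Iic yq, fdag y) - 1)
      ≤ (∫ y in Set.Iic yq, y * fdag y) - (1 / q) * ∫ y in Set.Iic yq, y * f y := by
    have hmono : ∫ y in Set.Iic yq, yq * (fdag y - f y / q)
        ≤ ∫ y in Set.Iic yq, (y * fdag y - (1 / q) * (y * f y)) := by
      apply setIntegral_mono_on hg1_int.integrableOn hg2_int.integrableOn measurableSet_Iic
      intro y hy
      have h1 : yq * (fdag y - f y / q) ≤ y * (fdag y - f y / q) :=
        mul_le_mul_of_nonpos_right hy (hdom' y)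
      calc yq * (fdag y - f y / q) ≤ y * (fdag y - f y / q) := h1
        _ = y * fdag y - (1 / q) * (y * f y) := by
            field_simp
    have hL : ∫ y in Set.Iic yq, yq * (fdag y - f y / q)
        = yq * ((∫ y in Set.Iic yq, fdag y) - 1) := by
      rw [integral_const_mul, integral_sub hfdag_int.integrableOn (hf_int.div_const q).integrableOn]
      rw [integral_div, hquant]
      rw [div_self (ne_of_gt hq0)]
    have hR : ∫ y in Set.Iic yq, (y * fdag y - (1 / q) * (y * f y))
        = (∫ y in Set.Iic yq, y * fdag y) - (1 / q) * ∫ y in Set.Iic yq, y * f y := by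
      rw [integral_sub hfdag_mom.integrableOn ((hf_mom.const_mul (1 / q)).integrableOn),
        integral_const_mul]
    rw [hL, hR] at hmono
    exact hmono
  -- Step F4 : strict inequality on Ioi yq
  have hgdiff_int : Integrable (fun y => (y - yq) * fdag y) := by
    have := hfdag_mom.sub (hfdag_int.const_mul yq)
    convert this using 1
    funext y; simp [Pi.sub_apply]; ring
  have hF4 : yq * (∫ y in Set.Ioi yq, fdag y) < ∫ y in Set.Ioi yq, y * fdag y := by
    have hpos' : 0 < ∫ y in Set.Ioi yq, (y - yq) * fdag y := by
      have hnn : 0 ≤ ∫ y in Set.Ioi yq, (y - yq) * fdag y := by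
        apply setIntegral_nonneg measurableSet_Ioi
        intro y hy
        exact mul_nonneg (by simpa using sub_nonneg.mpr (le_of_lt (Set.mem_Ioi.mp hy))) (hfdag_nonneg y)
      rcases hnn.lt_or_eq with h | h
      · exact h
      · exfalso
        have hzero : (fun y => (y - yq) * fdag y) =ᵐ[volume.restrict (Set.Ioi yq)] 0 := by
          have hnn' : 0 ≤ᵐ[volume.restrict (Set.Ioi yq)] fun y => (y - yq) * fdag y := by
            filter_upwards [ae_restrict_mem measurableSet_Ioi] with y hy
            exact mul_nonneg (by simpa using sub_nonneg.mpr (le_of_lt (Set.mem_Ioi.mp hy))) (hfdag_nonneg y)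
          exact (integral_eq_zero_iff_of_nonneg_ae hnn' hgdiff_int.integrableOn).mp h.symm
        have hfz : fdag =ᵐ[volume.restrict (Set.Ioi yq)] 0 := by
          filter_upwards [hzero, ae_restrict_mem measurableSet_Ioi] with y hy hy'
          have : (y - yq) * fdag y = 0 := hy
          have hne : y - yq ≠ 0 := sub_ne_zero.mpr (ne_of_gt hy')
          simpa [hne] using this
        have : ∫ y in Set.Ioi yq, fdag y = 0 := by
          rw [integral_congr_ae hfz]; simp
        linarith
    have heq : ∫ y in Set.Ioi yq, (y - yq) * fdag y
        = (∫ y in Set.Ioi yq, y * fdag y) - yq * ∫ y in Set.Ioi yq, fdag y := by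
      have : ∫ y in Set.Ioi yq, (y - yq) * fdag y
          = ∫ y in Set.Ioi yq, (y * fdag y - yq * fdag y) := by
        apply setIntegral_congr_fun measurableSet_Ioi
        intro y _; ring
      rw [this, integral_sub hfdag_mom.integrableOn ((hfdag_int.const_mul yq).integrableOn),
        integral_const_mul]
    rw [heq] at hpos'
    linarith
  -- combine via partitions
  have hmass_split : (∫ y in Set.Iic yq, fdag y) + (∫ y in Set.Ioi yq, fdag y) = 1 := by
    rw [intervalIntegral.integral_Iic_add_Ioi hfdag_int.integrableOn hfdag_int.integrableOn, hfdag_mass]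
  have hmom_split : (∫ y in Set.Iic yq, y * fdag y) + (∫ y in Set.Ioi yq, y * fdag y)
      = ∫ y, y * fdag y :=
    intervalIntegral.integral_Iic_add_Ioi hfdag_mom.integrableOn hfdag_mom.integrableOn
  have hzero : yq * ((∫ y in Set.Iic yq, fdag y) - 1) + yq * (∫ y in Set.Ioi yq, fdag y) = 0 := by
    linear_combination yq * hmass_split
  linarith [hF3, hF4, hzero, hmom_split]
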